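/- Let X be path connected and let H be a subgroup of π₁(X, x₀). Then X is homotopically Hausdorff relative to H if and only if the fiber (p_H⁻¹(x))^wh is a Hausdorff space for every x ∈ X. -/

import Mathlib

open Set TopologicalSpace unitInterval

universe u

namespace SLTF

attribute [local instance] Path.Homotopic.setoid

variable {X : Type u} [TopologicalSpace X]

/-- The homotopy class of a loop as an element of the fundamental group. -/
noncomputable def fl {x : X} (γ : Path x x) : FundamentalGroup X x :=
  @FundamentalGroup.fromPath X _ x ⟦γ⟧

/-- Multiplication of fundamental-group elements in path-concatenation order:
`pmul a b` is the class of "`a` followed by `b`". -/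
noncomputable def pmul {x : X} (a b : FundamentalGroup X x) : FundamentalGroup X x :=
  @FundamentalGroup.fromPath X _ x
    (Path.Homotopic.Quotient.trans (@FundamentalGroup.toPath X _ x a)
      (@FundamentalGroup.toPath X _ x b))

/-- A path in `X` starting at the base point `x`, recorded together with its end point. -/
structure PPath (X : Type u) [TopologicalSpace X] (x : X) where
  target : X
  path : Path x target

/-- Two paths starting at `x` are identified when they have the same end point and the
class of `α ⬝ β⁻¹` satisfies the predicate `P` (e.g. membership in a subgroup `H`). -/
def HRel (x : X) (P : Path x x → Prop) (α β : PPath X x) : Prop :=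
  ∃ h : α.target = β.target, P (α.path.trans ((β.path.cast rfl h).symm))

/-- The set `X̃` of `P`-equivalence classes of paths starting at `x`. -/
def Xtilde (x : X) (P : Path x x → Prop) : Type u := Quot (HRel x P)

/-- The class of a path in `X̃`. -/
def mkX (x : X) (P : Path x x → Prop) (α : PPath X x) : Xtilde x P := Quot.mk _ α

/-- The basic whisker-open set `([α], U)`: all classes of prolongations of `α` by a path in `U`. -/
def whBasic (x : X) (P : Path x x → Prop) (α : PPath X x) (U : Set X) : Set (Xtilde x P) :=
  { q | ∃ (y : X) (β : Path α.target y), range ⇑β ⊆ U ∧ q = mkX x P ⟨y, α.path.trans β⟩ }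

/-- The whisker topology on `X̃`, generated by the sets `([α], U)` for `U` an open
neighbourhood of the end point of `α`. -/
instance whTop (x : X) (P : Path x x → Prop) : TopologicalSpace (Xtilde x P) :=
  generateFrom
    { S | ∃ (α : PPath X x) (U : Set X), IsOpen U ∧ α.target ∈ U ∧ S = whBasic x P α U }

/-- The endpoint projection `p : X̃ → X`. -/
def endpt (x : X) (P : Path x x → Prop) : Xtilde x P → X :=
  Quot.lift (fun α => α.target) (fun _ _ h => h.elim fun e _ => e)

/-- The space of paths in `X` starting at `x`, with the compact-open topology. -/
def PSp (X : Type u) [TopologicalSpace X] (x : X) : Type u := { f : C(I, X) // f 0 = x }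

instance (x : X) : TopologicalSpace (PSp X x) := instTopologicalSpaceSubtype

/-- The natural surjection from the path space onto `X̃`. -/
def toXt (x : X) (P : Path x x → Prop) : PSp X x → Xtilde x P :=
  fun f => mkX x P ⟨f.1 1, ⟨f.1, f.2, rfl⟩⟩

/-- The quotient of the compact-open topology on `X̃`. -/
def topTop (x : X) (P : Path x x → Prop) : TopologicalSpace (Xtilde x P) :=
  coinduced (toXt x P) inferInstance

/-- Membership in a subgroup `H`, as a predicate on loops. -/
noncomputable def loopMem (x : X) (H : Subgroup (FundamentalGroup X x)) : Path x x → Prop :=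
  fun γ => fl γ ∈ H

/-- `X̃_H`, the classes of paths starting at `x₀` modulo `H`. -/
abbrev XtildeH (x₀ : X) (H : Subgroup (FundamentalGroup X x₀)) : Type u :=
  Xtilde x₀ (loopMem x₀ H)

/-- The fiber of the endpoint projection over `y`, with the subspace (whisker) topology. -/
abbrev Fib (x : X) (P : Path x x → Prop) (y : X) : Type u :=
  { q : Xtilde x P // endpt x P q = y }

/-- The class in the fiber over `y` of a path from `x` to `y`. -/
def mkFib (x : X) (P : Path x x → Prop) {y : X} (δ : Path x y) : Fib x P y :=
  ⟨mkX x P ⟨y, δ⟩, rfl⟩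

/-- The whisker topology on the fundamental group `π₁(X, x)`: basic neighbourhoods of `a`
are the sets `{a ⋆ [γ] : γ a loop in U at x}` for `U` an open neighbourhood of `x`. -/
noncomputable def whPi1 (x : X) : TopologicalSpace (FundamentalGroup X x) :=
  generateFrom
    { S | ∃ (a : FundamentalGroup X x) (U : Set X), IsOpen U ∧ x ∈ U ∧
        S = { b | ∃ γ : Path x x, range ⇑γ ⊆ U ∧ b = pmul a (fl γ) } }

/-- The quotient topology on `π₁(X, x)` induced from the loop space with the
compact-open topology. -/
noncomputable def qtopPi1 (x : X) : TopologicalSpace (FundamentalGroup X x) :=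
  coinduced (fun γ : Path x x => fl γ) inferInstance

/-- `X` is `H`-SLT at `x₀`. -/
noncomputable def IsHSLTAt (x₀ : X) (H : Subgroup (FundamentalGroup X x₀)) : Prop :=
  ∀ (y : X) (α : Path x₀ y) (U : Set X), IsOpen U → x₀ ∈ U →
    ∃ V : Set X, IsOpen V ∧ y ∈ V ∧
      ∀ β : Path y y, range ⇑β ⊆ V →
        ∃ γ : Path x₀ x₀, range ⇑γ ⊆ U ∧
          fl ((α.trans (β.trans α.symm)).trans γ.symm) ∈ H

/-- `X` is SLT at `x`. -/
def IsSLTAt (X : Type u) [TopologicalSpace X] (x : X) : Prop :=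
  ∀ (y : X) (α : Path x y) (U : Set X), IsOpen U → x ∈ U →
    ∃ V : Set X, IsOpen V ∧ y ∈ V ∧
      ∀ β : Path y y, range ⇑β ⊆ V →
        ∃ γ : Path x x, range ⇑γ ⊆ U ∧ (α.trans (β.trans α.symm)).Homotopic γ

/-- `X` is an SLT space. -/
def IsSLT (X : Type u) [TopologicalSpace X] : Prop := ∀ x : X, IsSLTAt X x

/-- `α` (a path from `x` to `y`) is an `H`-SLT path: for every path `lam` from `x₀` to `x`
and open `U ∋ x` there is an open `V ∋ y` such that every loop `β` in `V` at `y` transfers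
to a loop `γ` in `U` at `x` with `[α ⋆ β ⋆ α⁻¹ ⋆ γ⁻¹] ∈ [lam⁻¹ H lam]`, i.e.
`[lam ⋆ (α ⋆ β ⋆ α⁻¹ ⋆ γ⁻¹) ⋆ lam⁻¹] ∈ H`. -/
noncomputable def IsHSLTPath (x₀ : X) (H : Subgroup (FundamentalGroup X x₀)) {x y : X}
    (α : Path x y) : Prop :=
  ∀ (lam : Path x₀ x) (U : Set X), IsOpen U → x ∈ U →
    ∃ V : Set X, IsOpen V ∧ y ∈ V ∧
      ∀ β : Path y y, range ⇑β ⊆ V →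
        ∃ γ : Path x x, range ⇑γ ⊆ U ∧
          fl (lam.trans ((((α.trans (β.trans α.symm)).trans γ.symm)).trans lam.symm)) ∈ H

/-- `X` is an `H`-SLT space: for every `x` and every path `lam` from `x₀` to `x`, `X` is
`[lam⁻¹ H lam]`-SLT at `x`. -/
noncomputable def IsHSLTSpace (x₀ : X) (H : Subgroup (FundamentalGroup X x₀)) : Prop :=
  ∀ (x y : X) (α : Path x y), IsHSLTPath x₀ H α

/-- Membership in the conjugate subgroup `[lam⁻¹ H lam]` of `π₁(X, x)`,
as a predicate on loops at `x`. -/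
noncomputable def conjMem (x₀ : X) (H : Subgroup (FundamentalGroup X x₀)) {x : X}
    (lam : Path x₀ x) : Path x x → Prop :=
  fun δ => fl (lam.trans (δ.trans lam.symm)) ∈ H

/-- `X` is homotopically Hausdorff relative to `H`. -/
noncomputable def HomHausdorffRel (x₀ : X) (H : Subgroup (FundamentalGroup X x₀)) : Prop :=
  ∀ (y : X) (α : Path x₀ y) (g : FundamentalGroup X x₀), g ∉ H →
    ∃ U : Set X, IsOpen U ∧ y ∈ U ∧
      ∀ γ : Path y y, range ⇑γ ⊆ U →
        ¬ ∃ h ∈ H, fl (α.trans (γ.trans α.symm)) = pmul h g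

/-- `X` is homotopically path Hausdorff relative to `H`. -/
noncomputable def HomPathHausdorffRel (x₀ : X) (H : Subgroup (FundamentalGroup X x₀)) : Prop :=
  ∀ (y : X) (α β : Path x₀ y), fl (α.trans β.symm) ∉ H →
    ∃ (n : ℕ) (t : Fin (n + 1) → I) (U : Fin n → Set X),
      t 0 = 0 ∧ t (Fin.last n) = 1 ∧ StrictMono t ∧
      (∀ i : Fin n, IsOpen (U i)) ∧
      (∀ i : Fin n, ⇑α '' Set.Icc (t i.castSucc) (t i.succ) ⊆ U i) ∧
      ∀ γ : Path x₀ y,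
        (∀ i : Fin n, ⇑γ '' Set.Icc (t i.castSucc) (t i.succ) ⊆ U i) →
        (∀ i : Fin (n + 1), γ (t i) = α (t i)) →
        fl (γ.trans β.symm) ∉ H

/-- The endpoint projection `p : X̃ → X` (with the whisker topology on `X̃`) has the
unique path lifting property. -/
def UPLP (x : X) (P : Path x x → Prop) : Prop :=
  ∀ g₁ g₂ : C(I, Xtilde x P), g₁ 0 = g₂ 0 →
    (∀ t, endpt x P (g₁ t) = endpt x P (g₂ t)) → g₁ = g₂

/-- A semicovering map: a local homeomorphism with (continuous) unique lifting of paths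
and of homotopies. -/
structure IsSemicovering {Y : Type u} [TopologicalSpace Y] (p : Y → X) : Prop where
  localHomeo : IsLocalHomeomorph p
  pathLift : ∀ (y : Y) (γ : C(I, X)), γ 0 = p y →
    ∃! γh : C(I, Y), γh 0 = y ∧ ∀ t, p (γh t) = γ t
  contPathLift : ∀ y : Y, ∃ L : { γ : C(I, X) // γ 0 = p y } → C(I, Y),
    Continuous L ∧ ∀ γ, (L γ) 0 = y ∧ ∀ t, p ((L γ) t) = (γ : C(I, X)) t
  homotopyLift : ∀ (y : Y) (Φ : C(I × I, X)), Φ (0, 0) = p y →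
    ∃! Φh : C(I × I, Y), Φh (0, 0) = y ∧ ∀ z, p (Φh z) = Φ z
  contHomotopyLift : ∀ y : Y, ∃ L : { Φ : C(I × I, X) // Φ (0, 0) = p y } → C(I × I, Y),
    Continuous L ∧ ∀ Φ, (L Φ) (0, 0) = y ∧ ∀ z, p ((L Φ) z) = (Φ : C(I × I, X)) z

/-- An `lpc₀`-covering map with `p₊π₁(Y, ·) = H`: a map which is equivalent, as a map
over `X`, to the endpoint projection `p_H : X̃_H → X` having the unique path lifting
property (with `Y` path connected and locally path connected). -/
structure IsLpc0Covering {Y : Type u} [TopologicalSpace Y] (p : Y → X) (x₀ : X)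
    (H : Subgroup (FundamentalGroup X x₀)) : Prop where
  pathConnected : PathConnectedSpace Y
  locPathConnected : LocPathConnectedSpace Y
  uplp : UPLP x₀ (loopMem x₀ H)
  equiv : ∃ φ : Y ≃ₜ XtildeH x₀ H, ∀ y, endpt x₀ (loopMem x₀ H) (φ y) = p y

/-- The homomorphism induced by `p` on fundamental groups, as a function. -/
noncomputable def pStar {Y : Type u} [TopologicalSpace Y] (p : C(Y, X)) (y₀ : Y) :
    FundamentalGroup Y y₀ → FundamentalGroup X (p y₀) :=
  fun g => @FundamentalGroup.fromPath X _ (p y₀)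
    (Path.Homotopic.Quotient.map (@FundamentalGroup.toPath Y _ y₀ g) p)



section Aux

open CategoryTheory

variable {X : Type u} [TopologicalSpace X]

/-- The homotopy class of a path, as an arrow in the fundamental groupoid. -/
noncomputable abbrev hq {x y : X} (p : Path x y) :
    FundamentalGroupoid.mk x ⟶ FundamentalGroupoid.mk y := ⟦p⟧

theorem hq_trans {x y z : X} (p : Path x y) (q : Path y z) : hq (p.trans q) = hq p ≫ hq q :=
  rfl

theorem hq_symm {x y : X} (p : Path x y) : hq p.symm = Groupoid.inv (hq p) := rfl

theorem hq_refl (x : X) : hq (Path.refl x) = 𝟙 (FundamentalGroupoid.mk x) := rfl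

theorem pmul_eq {x : X} (a b : FundamentalGroup X x) : pmul a b = b * a := rfl

theorem fl_symm' {x : X} (γ : Path x x) : fl γ.symm = (fl γ)⁻¹ := rfl

variable (x₀ : X)

theorem flD_one {y : X} (p q : Path x₀ y) (h : hq p = hq q) : fl (p.trans q.symm) = 1 := by
  show hq (p.trans q.symm) = _
  rw [hq_trans, hq_symm, h]
  simp [Groupoid.inv_eq_inv]

theorem flD_trans {y : X} (p q r : Path x₀ y) :
    fl (p.trans r.symm) = pmul (fl (p.trans q.symm)) (fl (q.trans r.symm)) := by
  show hq (p.trans r.symm) = hq (p.trans q.symm) ≫ hq (q.trans r.symm)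
  simp only [hq_trans, hq_symm, Groupoid.inv_eq_inv]
  simp

theorem flD_symm_mul {y : X} (p q : Path x₀ y) :
    pmul (fl (p.trans q.symm)) (fl (q.trans p.symm)) = 1 := by
  show hq (p.trans q.symm) ≫ hq (q.trans p.symm) = 𝟙 _
  simp only [hq_trans, hq_symm, Groupoid.inv_eq_inv]
  simp

theorem flD_inv {y : X} (p q : Path x₀ y) :
    fl (q.trans p.symm) = (fl (p.trans q.symm))⁻¹ := by
  have h := flD_symm_mul x₀ p q
  rw [pmul_eq] at h
  exact eq_inv_of_mul_eq_one_left h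

theorem flD_ext {y z : X} (p q : Path x₀ y) (ε : Path y z) :
    fl ((p.trans ε).trans (q.trans ε).symm) = fl (p.trans q.symm) := by
  show hq ((p.trans ε).trans (q.trans ε).symm) = hq (p.trans q.symm)
  simp only [hq_trans, hq_symm, Groupoid.inv_eq_inv]
  simp

theorem flF {y : X} (α β : Path x₀ y) (γ₁ γ₂ : Path y y) :
    fl (α.trans ((γ₁.trans γ₂.symm).trans α.symm)) =
      pmul (fl ((α.trans γ₁).trans (β.trans γ₂).symm)) (fl (β.trans α.symm)) := by
  show hq (α.trans ((γ₁.trans γ₂.symm).trans α.symm))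
      = hq ((α.trans γ₁).trans (β.trans γ₂).symm) ≫ hq (β.trans α.symm)
  simp only [hq_trans, hq_symm, Groupoid.inv_eq_inv]
  simp

theorem flG1 {y : X} (α : Path x₀ y) (gl : Path x₀ x₀) :
    fl (α.trans (gl.trans α).symm) = fl gl.symm := by
  show hq (α.trans (gl.trans α).symm) = hq gl.symm
  simp only [hq_trans, hq_symm, Groupoid.inv_eq_inv]
  simp

theorem flG2 {y : X} (α : Path x₀ y) (γ : Path y y) (gl : Path x₀ x₀) :
    fl ((α.trans γ).trans ((gl.trans α).trans (Path.refl y)).symm)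
      = pmul (fl (α.trans (γ.trans α.symm))) (fl gl.symm) := by
  show hq ((α.trans γ).trans ((gl.trans α).trans (Path.refl y)).symm)
      = hq (α.trans (γ.trans α.symm)) ≫ hq gl.symm
  simp only [hq_trans, hq_symm, hq_refl, Groupoid.inv_eq_inv]
  simp

theorem exists_fl_eq (g : FundamentalGroup X x₀) : ∃ gl : Path x₀ x₀, fl gl = g := by
  refine ⟨(@FundamentalGroup.toPath X _ x₀ g).out, ?_⟩
  show (⟦_⟧ : Path.Homotopic.Quotient x₀ x₀) = _
  exact Quotient.out_eq _

variable (H : Subgroup (FundamentalGroup X x₀))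

theorem mk_eq_mk {y : X} {p q : Path x₀ y} (h : fl (p.trans q.symm) ∈ H) :
    mkX x₀ (loopMem x₀ H) ⟨y, p⟩ = mkX x₀ (loopMem x₀ H) ⟨y, q⟩ :=
  Quot.sound ⟨rfl, h⟩

theorem hrel_equiv : Equivalence (HRel x₀ (loopMem x₀ H)) := by
  constructor
  · rintro ⟨t, p⟩
    refine ⟨rfl, ?_⟩
    show fl (p.trans p.symm) ∈ H
    rw [flD_one x₀ p p rfl]
    exact H.one_mem
  · rintro ⟨t₁, p⟩ ⟨t₂, q⟩ ⟨h, hp⟩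
    dsimp only at h
    subst h
    refine ⟨rfl, ?_⟩
    replace hp : fl (p.trans q.symm) ∈ H := hp
    show fl (q.trans p.symm) ∈ H
    rw [flD_inv]
    exact H.inv_mem hp
  · rintro ⟨t₁, p⟩ ⟨t₂, q⟩ ⟨t₃, r⟩ ⟨h₁, hp⟩ ⟨h₂, hr⟩
    dsimp only at h₁ h₂
    subst h₁; subst h₂
    refine ⟨rfl, ?_⟩
    replace hp : fl (p.trans q.symm) ∈ H := hp
    replace hr : fl (q.trans r.symm) ∈ H := hr
    show fl (p.trans r.symm) ∈ H
    rw [flD_trans x₀ p q r, pmul_eq]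
    exact H.mul_mem hr hp

theorem mkX_eq_iff' (π ρ : PPath X x₀) :
    mkX x₀ (loopMem x₀ H) π = mkX x₀ (loopMem x₀ H) ρ ↔ HRel x₀ (loopMem x₀ H) π ρ :=
  Quot.eq.trans (Equivalence.eqvGen_iff (hrel_equiv x₀ H))

theorem mk_target_eq {π ρ : PPath X x₀}
    (h : mkX x₀ (loopMem x₀ H) π = mkX x₀ (loopMem x₀ H) ρ) : π.target = ρ.target := by
  obtain ⟨ht, -⟩ := (mkX_eq_iff' x₀ H π ρ).mp h
  exact ht

theorem mk_eq_iff {y : X} (p q : Path x₀ y) :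
    mkX x₀ (loopMem x₀ H) ⟨y, p⟩ = mkX x₀ (loopMem x₀ H) ⟨y, q⟩ ↔
      fl (p.trans q.symm) ∈ H := by
  constructor
  · intro h
    obtain ⟨ht, hp⟩ := (mkX_eq_iff' x₀ H _ _).mp h
    exact hp
  · exact mk_eq_mk x₀ H

theorem isOpen_whBasic (α : PPath X x₀) {U : Set X} (hU : IsOpen U) (hα : α.target ∈ U) :
    IsOpen (whBasic x₀ (loopMem x₀ H) α U) :=
  TopologicalSpace.GenerateOpen.basic _ ⟨α, U, hU, hα, rfl⟩

theorem mem_basic_self (π : PPath X x₀) {U : Set X} (h : π.target ∈ U) :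
    mkX x₀ (loopMem x₀ H) π ∈ whBasic x₀ (loopMem x₀ H) π U := by
  obtain ⟨t, p⟩ := π
  refine ⟨t, Path.refl t, ?_, ?_⟩
  · rw [Path.refl_range]
    exact singleton_subset_iff.mpr h
  · refine (mk_eq_mk x₀ H ?_).symm
    rw [flD_one x₀ _ p (by rw [hq_trans, hq_refl]; simp)]
    exact H.one_mem

theorem basic_subset {π δ : PPath X x₀} {U : Set X}
    (hmem : mkX x₀ (loopMem x₀ H) π ∈ whBasic x₀ (loopMem x₀ H) δ U) :
    π.target ∈ U ∧ whBasic x₀ (loopMem x₀ H) π U ⊆ whBasic x₀ (loopMem x₀ H) δ U := by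
  obtain ⟨tπ, pπ⟩ := π
  obtain ⟨z, βp, hβ, heq⟩ := hmem
  obtain ⟨ht, hP⟩ := (mkX_eq_iff' x₀ H _ _).mp heq
  dsimp only at ht
  subst ht
  replace hP : fl (pπ.trans (δ.path.trans βp).symm) ∈ H := hP
  constructor
  · exact hβ ⟨1, βp.target⟩
  · rintro q' ⟨w, ε, hε, rfl⟩
    refine ⟨w, βp.trans ε, ?_, ?_⟩
    · rw [Path.trans_range]
      exact union_subset hβ hε
    · refine mk_eq_mk x₀ H ?_
      rw [flD_trans x₀ _ ((δ.path.trans βp).trans ε) _, pmul_eq]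
      refine H.mul_mem ?_ ?_
      · rw [flD_one x₀ _ _ (by simp only [hq_trans]; simp)]
        exact H.one_mem
      · rw [flD_ext x₀ pπ (δ.path.trans βp) ε]
        exact hP

theorem whBasis :
    TopologicalSpace.IsTopologicalBasis (t := whTop x₀ (loopMem x₀ H))
      { S | ∃ (α : PPath X x₀) (U : Set X),
          IsOpen U ∧ α.target ∈ U ∧ S = whBasic x₀ (loopMem x₀ H) α U } := by
  refine ⟨?_, ?_, rfl⟩
  · rintro t₁ ⟨δ₁, U₁, hU₁, hδ₁, rfl⟩ t₂ ⟨δ₂, U₂, hU₂, hδ₂, rfl⟩ q ⟨hq₁, hq₂⟩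
    induction q using Quot.ind with
    | _ π =>
      have h₁ := basic_subset x₀ H (π := π) hq₁
      have h₂ := basic_subset x₀ H (π := π) hq₂
      refine ⟨whBasic x₀ (loopMem x₀ H) π (U₁ ∩ U₂),
        ⟨π, U₁ ∩ U₂, hU₁.inter hU₂, ⟨h₁.1, h₂.1⟩, rfl⟩,
        mem_basic_self x₀ H π ⟨h₁.1, h₂.1⟩, ?_⟩
      rintro q' ⟨w, ε, hε, rfl⟩
      exact ⟨h₁.2 ⟨w, ε, hε.trans inter_subset_left, rfl⟩,
        h₂.2 ⟨w, ε, hε.trans inter_subset_right, rfl⟩⟩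
  · apply eq_univ_of_forall
    intro q
    induction q using Quot.ind with
    | _ π =>
      exact ⟨whBasic x₀ (loopMem x₀ H) π univ,
        ⟨π, univ, isOpen_univ, mem_univ _, rfl⟩, mem_basic_self x₀ H π (mem_univ _)⟩

theorem fib_rep {y : X} (a : Fib x₀ (loopMem x₀ H) y) :
    ∃ δ : Path x₀ y, a = mkFib x₀ (loopMem x₀ H) δ := by
  obtain ⟨q, hq⟩ := a
  induction q using Quot.ind with
  | _ π =>
    obtain ⟨t, p⟩ := π
    have ht : t = y := hq
    subst ht
    exact ⟨p, rfl⟩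

end Aux

/-- Let `X` be path connected and let `H` be a subgroup of `π₁(X, x₀)`.
Then `X` is homotopically Hausdorff relative to `H` if and only if the fiber
`(p_H⁻¹(x))^wh` is a Hausdorff space for every `x ∈ X`. -/
theorem statement17 {X : Type u} [TopologicalSpace X] [PathConnectedSpace X] (x₀ : X)
    (H : Subgroup (FundamentalGroup X x₀)) :
    HomHausdorffRel x₀ H ↔ ∀ x : X, T2Space (Fib x₀ (loopMem x₀ H) x) := by
  classical
  constructor
  · -- homotopically Hausdorff rel H → fibers are T2
    intro hHH y
    refine ⟨fun a b hab => ?_⟩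
    obtain ⟨α, rfl⟩ := fib_rep x₀ H a
    obtain ⟨β, rfl⟩ := fib_rep x₀ H b
    have hne : fl (α.trans β.symm) ∉ H := by
      intro hmem
      exact hab (Subtype.ext (mk_eq_mk x₀ H hmem))
    have hg : fl (β.trans α.symm) ∉ H := by
      intro hmem
      rw [flD_inv x₀ α β] at hmem
      exact hne (inv_mem_iff.mp hmem)
    obtain ⟨U, hUo, hyU, hU⟩ := hHH y α (fl (β.trans α.symm)) hg
    refine ⟨Subtype.val ⁻¹' whBasic x₀ (loopMem x₀ H) ⟨y, α⟩ U,
      Subtype.val ⁻¹' whBasic x₀ (loopMem x₀ H) ⟨y, β⟩ U,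
      (isOpen_whBasic x₀ H _ hUo hyU).preimage continuous_subtype_val,
      (isOpen_whBasic x₀ H _ hUo hyU).preimage continuous_subtype_val,
      mem_basic_self x₀ H _ hyU, mem_basic_self x₀ H _ hyU, ?_⟩
    rw [Set.disjoint_left]
    rintro c hc1 hc2
    obtain ⟨δ, rfl⟩ := fib_rep x₀ H c
    obtain ⟨z₁, β₁, hβ₁, he₁⟩ := hc1
    obtain ⟨z₂, β₂, hβ₂, he₂⟩ := hc2
    have ht₁ : y = z₁ := mk_target_eq x₀ H he₁
    subst ht₁
    have ht₂ : y = z₂ := mk_target_eq x₀ H he₂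
    subst ht₂
    have hP₁ : fl (δ.trans (α.trans β₁).symm) ∈ H := (mk_eq_iff x₀ H _ _).mp he₁
    have hP₂ : fl (δ.trans (β.trans β₂).symm) ∈ H := (mk_eq_iff x₀ H _ _).mp he₂
    have h1 : fl ((α.trans β₁).trans δ.symm) ∈ H := by
      rw [flD_inv x₀ δ (α.trans β₁)]
      exact H.inv_mem hP₁
    have hH2 : fl ((α.trans β₁).trans (β.trans β₂).symm) ∈ H := by
      rw [flD_trans x₀ (α.trans β₁) δ (β.trans β₂), pmul_eq]
      exact H.mul_mem hP₂ h1
    refine hU (β₁.trans β₂.symm) ?_ ⟨_, hH2, flF x₀ α β β₁ β₂⟩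
    rw [Path.trans_range, Path.symm_range]
    exact union_subset hβ₁ hβ₂
  · -- fibers are T2 → homotopically Hausdorff rel H
    intro hT2 y α g hg
    obtain ⟨gl, hgl⟩ := exists_fl_eq x₀ g
    have hne : (mkFib x₀ (loopMem x₀ H) α : Fib x₀ (loopMem x₀ H) y)
        ≠ mkFib x₀ (loopMem x₀ H) (gl.trans α) := by
      intro h
      apply hg
      have h' := congrArg Subtype.val h
      have hm : fl (α.trans (gl.trans α).symm) ∈ H := (mk_eq_iff x₀ H _ _).mp h'
      rw [flG1 x₀ α gl, fl_symm', hgl] at hm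
      exact inv_mem_iff.mp hm
    obtain ⟨u, v, hu, hv, hau, hbv, huv⟩ := t2_separation hne
    rw [isOpen_induced_iff] at hu hv
    obtain ⟨W₁, hW₁o, hW₁e⟩ := hu
    obtain ⟨W₂, hW₂o, hW₂e⟩ := hv
    have hmemW₁ : mkX x₀ (loopMem x₀ H) ⟨y, α⟩ ∈ W₁ := by
      rw [← hW₁e] at hau; exact hau
    have hmemW₂ : mkX x₀ (loopMem x₀ H) ⟨y, gl.trans α⟩ ∈ W₂ := by
      rw [← hW₂e] at hbv; exact hbv
    obtain ⟨S₁, hS₁B, hS₁m, hS₁s⟩ :=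
      (whBasis x₀ H).exists_subset_of_mem_open hmemW₁ hW₁o
    obtain ⟨S₂, hS₂B, hS₂m, hS₂s⟩ :=
      (whBasis x₀ H).exists_subset_of_mem_open hmemW₂ hW₂o
    obtain ⟨δ₁, U₁, hU₁o, -, rfl⟩ := hS₁B
    obtain ⟨δ₂, U₂, hU₂o, -, rfl⟩ := hS₂B
    have h₁ := basic_subset x₀ H (π := ⟨y, α⟩) hS₁m
    have h₂ := basic_subset x₀ H (π := ⟨y, gl.trans α⟩) hS₂m
    refine ⟨U₁ ∩ U₂, hU₁o.inter hU₂o, ⟨h₁.1, h₂.1⟩, ?_⟩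
    rintro γ hγ ⟨h, hH, heq⟩
    have hflc : fl ((α.trans γ).trans ((gl.trans α).trans (Path.refl y)).symm) ∈ H := by
      rw [flG2 x₀ α γ gl, heq, fl_symm', hgl, pmul_eq, pmul_eq, inv_mul_cancel_left]
      exact hH
    have hc1 : mkX x₀ (loopMem x₀ H) ⟨y, α.trans γ⟩ ∈
        whBasic x₀ (loopMem x₀ H) ⟨y, α⟩ U₁ :=
      ⟨y, γ, hγ.trans inter_subset_left, rfl⟩
    have hc2 : mkX x₀ (loopMem x₀ H) ⟨y, α.trans γ⟩ ∈
        whBasic x₀ (loopMem x₀ H) ⟨y, gl.trans α⟩ U₂ := by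
      refine ⟨y, Path.refl y, ?_, mk_eq_mk x₀ H hflc⟩
      rw [Path.refl_range]
      exact singleton_subset_iff.mpr h₂.1
    have hcu : (⟨mkX x₀ (loopMem x₀ H) ⟨y, α.trans γ⟩, rfl⟩ :
        Fib x₀ (loopMem x₀ H) y) ∈ u := by
      rw [← hW₁e]
      exact hS₁s (h₁.2 hc1)
    have hcv : (⟨mkX x₀ (loopMem x₀ H) ⟨y, α.trans γ⟩, rfl⟩ :
        Fib x₀ (loopMem x₀ H) y) ∈ v := by
      rw [← hW₂e]
      exact hS₂s (h₂.2 hc2)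
    exact Set.disjoint_left.mp huv hcu hcv


end SLTF
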